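/- Let m, n ∈ ℕ. (1) If m+1 does not divide n+1, then there is an (m+1)-step inductive formula that is not (n+1)-step inductive. (2) If m > n, then there is an (m+1)-inductive formula that is not (n+1)-inductive. -/

import Mathlib

open FirstOrder Language

/-! ### The language `L_OR = {0, 1, +, ×, <}` of ordered rings -/

/-- Function symbols of the language of ordered rings. -/
inductive LorFunc : ℕ → Type
  | zero : LorFunc 0
  | one : LorFunc 0
  | add : LorFunc 2
  | mul : LorFunc 2

/-- Relation symbols of the language of ordered rings: just `<`. -/
inductive LorRel : ℕ → Type
  | lt : LorRel 2

/-- The first-order language of ordered rings. -/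
def Lor : Language := ⟨LorFunc, LorRel⟩

/-- The term `0`. -/
def zeroT {α : Type} : Lor.Term α := Constants.term LorFunc.zero

/-- The term `1`. -/
def oneT {α : Type} : Lor.Term α := Constants.term LorFunc.one

/-- Addition of terms. -/
def addT {α : Type} (t u : Lor.Term α) : Lor.Term α := Functions.apply₂ LorFunc.add t u

/-- Multiplication of terms. -/
def mulT {α : Type} (t u : Lor.Term α) : Lor.Term α := Functions.apply₂ LorFunc.mul t u

/-- The term `2`, an abbreviation for `1 + 1`. -/
def twoT {α : Type} : Lor.Term α := addT oneT oneT

/-- The numeral `k`, i.e. the closed term `(⋯((0+1)+1)+⋯+1)` with `k` ones. -/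
def numT {α : Type} : ℕ → Lor.Term α
  | 0 => zeroT
  | n + 1 => addT (numT n) oneT

/-- The bounded formula `t < u`. -/
def ltBF {α : Type} {n : ℕ} (t u : Lor.Term (α ⊕ Fin n)) : Lor.BoundedFormula α n :=
  Relations.boundedFormula₂ LorRel.lt t u

/-- The formula `t < u`. -/
def ltFml {α : Type} (t u : Lor.Term α) : Lor.Formula α :=
  Relations.formula₂ LorRel.lt t u

/-- The formula `t ≤ u`, an abbreviation for `t < u ∨ t = u`. -/
def leFml {α : Type} (t u : Lor.Term α) : Lor.Formula α :=
  ltFml t u ⊔ Term.equal t u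

/-! ### The base theory `PA⁻` -/

/-- `PA⁻`, the theory of non-negative parts of discretely ordered rings. -/
def PAminus : Lor.Theory :=
  { -- (P1) associativity of +
    ∀' ∀' ∀' (addT (addT &0 &1) &2 =' addT &0 (addT &1 &2)),
    -- (P2) commutativity of +
    ∀' ∀' (addT &0 &1 =' addT &1 &0),
    -- (P3) associativity of ×
    ∀' ∀' ∀' (mulT (mulT &0 &1) &2 =' mulT &0 (mulT &1 &2)),
    -- (P4) commutativity of ×
    ∀' ∀' (mulT &0 &1 =' mulT &1 &0),
    -- (P5) distributivity
    ∀' ∀' ∀' (mulT &0 (addT &1 &2) =' addT (mulT &0 &1) (mulT &0 &2)),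
    -- (P6) x + 0 = x
    ∀' (addT &0 zeroT =' &0),
    -- (P7) x × 0 = 0
    ∀' (mulT &0 zeroT =' zeroT),
    -- (P8) x × 1 = x
    ∀' (mulT &0 oneT =' &0),
    -- (P9) transitivity of <
    ∀' ∀' ∀' (ltBF &0 &1 ⊓ ltBF &1 &2 ⟹ ltBF &0 &2),
    -- (P10) irreflexivity of <
    ∀' ∼(ltBF &0 &0),
    -- (P11) linearity of <
    ∀' ∀' (ltBF &0 &1 ⊔ &0 =' &1 ⊔ ltBF &1 &0),
    -- (P12) x < y → x + z < y + z
    ∀' ∀' ∀' (ltBF &0 &1 ⟹ ltBF (addT &0 &2) (addT &1 &2)),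
    -- (P13) z ≠ 0 ∧ x < y → x × z < y × z
    ∀' ∀' ∀' (∼(&2 =' zeroT) ⊓ ltBF &0 &1 ⟹ ltBF (mulT &0 &2) (mulT &1 &2)),
    -- (P14) x < y ↔ ∃z ((x + z) + 1 = y)
    ∀' ∀' (ltBF &0 &1 ⇔ ∃' (addT (addT &0 &2) oneT =' &1)),
    -- (P15) 0 < 1 ∧ (x > 0 → x ≥ 1)
    ltBF zeroT oneT ⊓ ∀' (ltBF zeroT &0 ⟹ ltBF oneT &0 ⊔ oneT =' &0),
    -- (P16) x ≥ 0
    ∀' (ltBF zeroT &0 ⊔ zeroT =' &0) }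

/-! ### Formulas `θ(x, z̄)` with a distinguished variable `x` and parameters `z̄`

A formula `θ(x, z̄)` with `m` parameters `z̄` and a distinguished induction
variable `x` is represented as `θ : Lor.Formula (Fin m ⊕ Fin 1)`, where the
`Fin m` component gives the parameters and the `Fin 1` component gives `x`. -/

/-- The distinguished variable `x` as a term. -/
def xT {m : ℕ} : Lor.Term (Fin m ⊕ Fin 1) := Term.var (Sum.inr 0)

/-- `θ(t, z̄)`, where `t` is a term possibly involving `x` and the parameters. -/
def substX {m : ℕ} (θ : Lor.Formula (Fin m ⊕ Fin 1)) (t : Lor.Term (Fin m ⊕ Fin 1)) :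
    Lor.Formula (Fin m ⊕ Fin 1) :=
  θ.subst (Sum.elim (fun i => Term.var (Sum.inl i)) fun _ => t)

/-- `θ(t, z̄)` where `t` is a term in the parameters only. -/
def substP {m : ℕ} (θ : Lor.Formula (Fin m ⊕ Fin 1)) (t : Lor.Term (Fin m)) :
    Lor.Formula (Fin m) :=
  θ.subst (Sum.elim (fun i => Term.var i) fun _ => t)

/-- `∀x θ(x, z̄)`. -/
noncomputable def allX {m : ℕ} (θ : Lor.Formula (Fin m ⊕ Fin 1)) : Lor.Formula (Fin m) :=
  Formula.iAlls (Fin 1) θ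

/-- The universal closure of a formula, as a sentence. -/
noncomputable def closeAll {α : Type} [Finite α] (φ : Lor.Formula α) : Lor.Sentence :=
  Formula.iAlls α (φ.relabel (Sum.inr : α → Empty ⊕ α))

/-- `∀x' < x, θ(x', z̄)`, a formula with free variable `x` (and parameters). -/
noncomputable def allLtX {m : ℕ} (θ : Lor.Formula (Fin m ⊕ Fin 1)) :
    Lor.Formula (Fin m ⊕ Fin 1) :=
  Formula.iAlls (Fin 1)
    (ltFml (Term.var (Sum.inr 0)) (Term.var (Sum.inl (Sum.inr 0))) ⟹
      θ.relabel (Sum.elim (fun i => Sum.inl (Sum.inl i)) fun _ => Sum.inr 0))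

/-- `∀x' ≤ x, θ(x', z̄)`, a formula with free variable `x` (and parameters). -/
noncomputable def allLeX {m : ℕ} (θ : Lor.Formula (Fin m ⊕ Fin 1)) :
    Lor.Formula (Fin m ⊕ Fin 1) :=
  Formula.iAlls (Fin 1)
    (leFml (Term.var (Sum.inr 0)) (Term.var (Sum.inl (Sum.inr 0))) ⟹
      θ.relabel (Sum.elim (fun i => Sum.inl (Sum.inl i)) fun _ => Sum.inr 0))

/-- The conjunction `⋀_{k<j} θ(k, z̄)`. -/
def conjNum {m : ℕ} (θ : Lor.Formula (Fin m ⊕ Fin 1)) : ℕ → Lor.Formula (Fin m)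
  | 0 => ⊤
  | j + 1 => conjNum θ j ⊓ substP θ (numT j)

/-- The conjunction `⋀_{k<j} θ(x+k, z̄)`. -/
def conjShift {m : ℕ} (θ : Lor.Formula (Fin m ⊕ Fin 1)) : ℕ → Lor.Formula (Fin m ⊕ Fin 1)
  | 0 => ⊤
  | j + 1 => conjShift θ j ⊓ substX θ (addT xT (numT j))

/-! ### Induction axioms -/

/-- The induction axiom `I_x θ`:
`∀z̄( θ(0,z̄) ∧ ∀x(θ(x,z̄) → θ(x+1,z̄)) → ∀x θ(x,z̄) )`. -/
noncomputable def indAx {m : ℕ} (θ : Lor.Formula (Fin m ⊕ Fin 1)) : Lor.Sentence :=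
  closeAll ((substP θ zeroT ⊓ allX (θ ⟹ substX θ (addT xT oneT))) ⟹ allX θ)

/-- The `<`-induction axiom `I^<_x θ`:
`∀z̄( ∀y(∀x<y θ(x,z̄) → θ(y,z̄)) → ∀x θ(x,z̄) )`. -/
noncomputable def indLtAx {m : ℕ} (θ : Lor.Formula (Fin m ⊕ Fin 1)) : Lor.Sentence :=
  closeAll (allX (allLtX θ ⟹ θ) ⟹ allX θ)

/-- The `(n+1)`-step induction axiom `I^{(n+1)-step}_x θ`:
`∀z̄( ⋀_{k<n+1} θ(k,z̄) ∧ ∀x(θ(x,z̄) → θ(x+n+1,z̄)) → ∀x θ(x,z̄) )`. -/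
noncomputable def indStepAx {m : ℕ} (n : ℕ) (θ : Lor.Formula (Fin m ⊕ Fin 1)) : Lor.Sentence :=
  closeAll ((conjNum θ (n + 1) ⊓ allX (θ ⟹ substX θ (addT xT (numT (n + 1))))) ⟹ allX θ)

/-- The `(n+1)`-induction axiom `I^{n+1}_x θ`:
`∀z̄( ⋀_{k<n+1} θ(k,z̄) ∧ ∀x(⋀_{k<n+1} θ(x+k,z̄) → θ(x+n+1,z̄)) → ∀x θ(x,z̄) )`. -/
noncomputable def indKAx {m : ℕ} (n : ℕ) (θ : Lor.Formula (Fin m ⊕ Fin 1)) : Lor.Sentence :=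
  closeAll ((conjNum θ (n + 1) ⊓ allX (conjShift θ (n + 1) ⟹ substX θ (addT xT (numT (n + 1))))) ⟹
    allX θ)

/-- The polynomial induction axiom `I^p_x θ`:
`∀z̄( θ(0,z̄) ∧ ∀x(θ(x,z̄) → θ(2x,z̄) ∧ θ(2x+1,z̄)) → ∀x θ(x,z̄) )`, where `2x` is `(1+1)×x`. -/
noncomputable def indPAx {m : ℕ} (θ : Lor.Formula (Fin m ⊕ Fin 1)) : Lor.Sentence :=
  closeAll ((substP θ zeroT ⊓
      allX (θ ⟹ substX θ (mulT twoT xT) ⊓ substX θ (addT (mulT twoT xT) oneT))) ⟹ allX θ)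

/-! ### Theories -/

/-- Peano arithmetic: `PA⁻` plus induction for all `L_OR` formulas. -/
noncomputable def PA : Lor.Theory :=
  PAminus ∪ {σ | ∃ (m : ℕ) (θ : Lor.Formula (Fin m ⊕ Fin 1)), σ = indAx θ}

/-- `IOpen`: `PA⁻` plus induction for all quantifier-free `L_OR` formulas. -/
noncomputable def IOpen : Lor.Theory :=
  PAminus ∪ {σ | ∃ (m : ℕ) (θ : Lor.Formula (Fin m ⊕ Fin 1)), θ.IsQF ∧ σ = indAx θ}

/-! ### Notions of inductiveness

A formula `φ(x)` with exactly one free variable `x` is represented as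
`φ : Lor.Formula (Fin 0 ⊕ Fin 1)` (no parameters). -/

/-- Formulas `φ(x)` with exactly one free variable `x`. -/
abbrev OneVarFormula : Type := Lor.Formula (Fin 0 ⊕ Fin 1)

/-- The sentence `∀x φ(x)`. -/
noncomputable def allS (φ : OneVarFormula) : Lor.Sentence := closeAll (allX φ)

/-- `φ(x)` is inductive: `PA⁻ ⊢ φ(0)` and `PA⁻ ⊢ ∀x(φ(x) → φ(x+1))`. -/
noncomputable def IsInductive (φ : OneVarFormula) : Prop :=
  PAminus ⊨ᵇ closeAll (substP φ zeroT) ∧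
    PAminus ⊨ᵇ closeAll (allX (φ ⟹ substX φ (addT xT oneT)))

/-- `φ(x)` is `<`-inductive: `PA⁻ ⊢ ∀y(∀x<y φ(x) → φ(y))`. -/
noncomputable def IsLtInductive (φ : OneVarFormula) : Prop :=
  PAminus ⊨ᵇ closeAll (allX (allLtX φ ⟹ φ))

/-- `φ(x)` is `(n+1)`-step inductive:
`PA⁻ ⊢ ⋀_{k<n+1} φ(k) ∧ ∀x(φ(x) → φ(x+n+1))`. -/
noncomputable def IsStepInductive (n : ℕ) (φ : OneVarFormula) : Prop :=
  PAminus ⊨ᵇ closeAll (conjNum φ (n + 1) ⊓ allX (φ ⟹ substX φ (addT xT (numT (n + 1)))))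

/-- `φ(x)` is `(n+1)`-inductive:
`PA⁻ ⊢ ⋀_{k<n+1} φ(k) ∧ ∀x(⋀_{k<n+1} φ(x+k) → φ(x+n+1))`. -/
noncomputable def IsKInductive (n : ℕ) (φ : OneVarFormula) : Prop :=
  PAminus ⊨ᵇ
    closeAll (conjNum φ (n + 1) ⊓ allX (conjShift φ (n + 1) ⟹ substX φ (addT xT (numT (n + 1)))))

/-- `φ(x)` is p-inductive (polynomially inductive):
`PA⁻ ⊢ φ(0) ∧ ∀x(φ(x) → φ(2x) ∧ φ(2x+1))`. -/
noncomputable def IsPInductive (φ : OneVarFormula) : Prop :=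
  PAminus ⊨ᵇ closeAll (substP φ zeroT ⊓
    allX (φ ⟹ substX φ (mulT twoT xT) ⊓ substX φ (addT (mulT twoT xT) oneT)))

/-! ### Cuts -/

/-- `φ(x)` is a cut: an inductive formula with `PA⁻ ⊢ ∀x∀y(x<y ∧ φ(y) → φ(x))`. -/
noncomputable def IsCut (φ : OneVarFormula) : Prop :=
  IsInductive φ ∧
    PAminus ⊨ᵇ closeAll
      (ltFml (Term.var (Sum.inr 0) : Lor.Term (Fin 0 ⊕ Fin 2)) (Term.var (Sum.inr 1)) ⊓
          φ.relabel (Sum.elim (fun i => Sum.inl i) fun _ => Sum.inr 1) ⟹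
        φ.relabel (Sum.elim (fun i => Sum.inl i) fun _ => Sum.inr 0))

/-- `φ(x)` is an a-cut: a cut with `PA⁻ ⊢ ∀x(φ(x) → φ(x+x))`. -/
noncomputable def IsACut (φ : OneVarFormula) : Prop :=
  IsCut φ ∧ PAminus ⊨ᵇ closeAll (allX (φ ⟹ substX φ (addT xT xT)))

/-- `φ(x)` is an am-cut: an a-cut with `PA⁻ ⊢ ∀x(φ(x) → φ(x×x))`. -/
noncomputable def IsAMCut (φ : OneVarFormula) : Prop :=
  IsACut φ ∧ PAminus ⊨ᵇ closeAll (allX (φ ⟹ substX φ (mulT xT xT)))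

section Infra

variable {M : Type} [Lor.Structure M]

/-- Interpretation of `0`. -/
def zM : M := Structure.funMap (L := Lor) LorFunc.zero ![]
/-- Interpretation of `1`. -/
def oM : M := Structure.funMap (L := Lor) LorFunc.one ![]
/-- Interpretation of `+`. -/
def addM (a b : M) : M := Structure.funMap (L := Lor) LorFunc.add ![a, b]
/-- Interpretation of `×`. -/
def mulM (a b : M) : M := Structure.funMap (L := Lor) LorFunc.mul ![a, b]
/-- Interpretation of `<`. -/
def ltM (a b : M) : Prop := Structure.RelMap (L := Lor) LorRel.lt ![a, b]
/-- Interpretation of numerals. -/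
def numM : ℕ → M
  | 0 => zM
  | k + 1 => addM (numM k) oM

@[simp] lemma funMap_zeroM (x : Fin 0 → M) :
    Structure.funMap (L := Lor) LorFunc.zero x = zM := by
  rw [Subsingleton.elim x ![] ]; rfl
@[simp] lemma funMap_oneM (x : Fin 0 → M) :
    Structure.funMap (L := Lor) LorFunc.one x = oM := by
  rw [Subsingleton.elim x ![] ]; rfl
@[simp] lemma funMap_addM (a b : M) :
    Structure.funMap (L := Lor) LorFunc.add ![a, b] = addM a b := rfl
@[simp] lemma funMap_mulM (a b : M) :
    Structure.funMap (L := Lor) LorFunc.mul ![a, b] = mulM a b := rfl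
@[simp] lemma relMap_ltM (a b : M) :
    Structure.RelMap (L := Lor) LorRel.lt ![a, b] = ltM a b := rfl

@[simp] lemma realize_zeroT {α : Type} (v : α → M) : (zeroT).realize v = zM := by
  simp [zeroT, Constants.term, Term.realize]
@[simp] lemma realize_oneT {α : Type} (v : α → M) : (oneT).realize v = oM := by
  simp [oneT, Constants.term, Term.realize]
@[simp] lemma realize_addT {α : Type} (t u : Lor.Term α) (v : α → M) :
    (addT t u).realize v = addM (t.realize v) (u.realize v) := by
  exact Term.realize_functions_apply₂
@[simp] lemma realize_mulT {α : Type} (t u : Lor.Term α) (v : α → M) :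
    (mulT t u).realize v = mulM (t.realize v) (u.realize v) := by
  exact Term.realize_functions_apply₂
@[simp] lemma realize_numT {α : Type} (k : ℕ) (v : α → M) :
    (numT k).realize v = numM k := by
  induction k with
  | zero => simp [numT, numM]
  | succ k ih => simp [numT, numM, ih]

@[simp] lemma realize_ltBF {α : Type} {n : ℕ} (t u : Lor.Term (α ⊕ Fin n)) (v : α → M)
    (xs : Fin n → M) :
    (ltBF t u).Realize v xs ↔ ltM (t.realize (Sum.elim v xs)) (u.realize (Sum.elim v xs)) := by
  exact BoundedFormula.realize_rel₂

@[simp] lemma realize_ltFml {α : Type} (t u : Lor.Term α) (v : α → M) :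
    (ltFml t u).Realize v ↔ ltM (t.realize v) (u.realize v) := by
  exact Formula.realize_rel₂

end Infra

section Translate

variable {M : Type} [Lor.Structure M]

/-- The environment assigning `x` to the unique free variable. -/
def envM (x : M) : Fin 0 ⊕ Fin 1 → M := fun _ => x

lemma env_eq (v : Fin 0 ⊕ Fin 1 → M) : v = envM (v (Sum.inr 0)) := by
  funext a
  rcases a with i | i
  · exact i.elim0
  · have : i = 0 := Subsingleton.elim _ _
    rw [this]; rfl

lemma realize_to_env {θ : Lor.Formula (Fin 0 ⊕ Fin 1)} {v : Fin 0 ⊕ Fin 1 → M} {x : M}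
    (h : v (Sum.inr 0) = x) (hv : θ.Realize v) : θ.Realize (envM x) := by
  have hvw : v = envM x := by rw [env_eq v, h]
  rw [← hvw]; exact hv

lemma realize_of_env {θ : Lor.Formula (Fin 0 ⊕ Fin 1)} {w : Fin 0 ⊕ Fin 1 → M} {x : M}
    (h : w (Sum.inr 0) = x) (hv : θ.Realize (envM x)) : θ.Realize w := by
  have hvw : w = envM x := by rw [env_eq w, h]
  rw [hvw]; exact hv

lemma realize_closeAll {χ : Lor.Formula (Fin 0)} (v : Empty → M) (xs : Fin 0 → M) :
    BoundedFormula.Realize (closeAll χ) v xs ↔ χ.Realize (finZeroElim : Fin 0 → M) := by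
  rw [closeAll]
  rw [BoundedFormula.realize_iAlls]
  constructor
  · intro h
    have := h (finZeroElim : Fin 0 → M)
    rw [Formula.realize_relabel] at this
    convert this using 2
  · intro h i
    have : i = (finZeroElim : Fin 0 → M) := Subsingleton.elim _ _
    subst this
    rw [Formula.realize_relabel]
    convert h using 2

lemma realize_allX {θ : Lor.Formula (Fin 0 ⊕ Fin 1)} (v : Fin 0 → M) :
    (allX θ).Realize v ↔ ∀ x : M, θ.Realize (envM x) := by
  rw [allX, Formula.realize_iAlls]
  constructor
  · intro h x
    exact realize_to_env rfl (h (fun _ => x))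
  · intro h i
    exact realize_of_env rfl (h (i 0))

lemma realize_substX {θ : Lor.Formula (Fin 0 ⊕ Fin 1)} (t : Lor.Term (Fin 0 ⊕ Fin 1)) (x : M) :
    (substX θ t).Realize (envM x) ↔ θ.Realize (envM (t.realize (envM x))) := by
  rw [substX, Formula.Realize, BoundedFormula.realize_subst]
  exact ⟨fun h => realize_to_env rfl h, fun h => realize_of_env rfl h⟩

lemma realize_substP {θ : Lor.Formula (Fin 0 ⊕ Fin 1)} (t : Lor.Term (Fin 0)) (v : Fin 0 → M) :
    (substP θ t).Realize v ↔ θ.Realize (envM (t.realize v)) := by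
  rw [substP, Formula.Realize, BoundedFormula.realize_subst]
  exact ⟨fun h => realize_to_env rfl h, fun h => realize_of_env rfl h⟩

lemma realize_conjNum {θ : Lor.Formula (Fin 0 ⊕ Fin 1)} (j : ℕ) (v : Fin 0 → M) :
    (conjNum θ j).Realize v ↔ ∀ k < j, θ.Realize (envM (numM k : M)) := by
  induction j with
  | zero =>
    rw [conjNum]
    exact ⟨fun _ k hk => absurd hk (Nat.not_lt_zero k),
      fun _ => BoundedFormula.realize_top.2 trivial⟩
  | succ j ih =>
    rw [conjNum, Formula.realize_inf, ih, realize_substP]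
    simp only [realize_numT]
    constructor
    · rintro ⟨h1, h2⟩ k hk
      rcases Nat.lt_succ_iff_lt_or_eq.1 hk with h | rfl
      · exact h1 k h
      · exact h2
    · intro h
      exact ⟨fun k hk => h k (hk.trans (Nat.lt_succ_self j)), h j (Nat.lt_succ_self j)⟩

lemma realize_conjShift {θ : Lor.Formula (Fin 0 ⊕ Fin 1)} (j : ℕ) (x : M) :
    (conjShift θ j).Realize (envM x) ↔ ∀ k < j, θ.Realize (envM (addM x (numM k) : M)) := by
  induction j with
  | zero =>
    rw [conjShift]
    exact ⟨fun _ k hk => absurd hk (Nat.not_lt_zero k),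
      fun _ => BoundedFormula.realize_top.2 trivial⟩
  | succ j ih =>
    rw [conjShift, Formula.realize_inf, ih, realize_substX]
    simp only [realize_numT, realize_addT]
    rw [show (Term.realize (envM x) (xT : Lor.Term (Fin 0 ⊕ Fin 1)) : M) = x from rfl]
    constructor
    · rintro ⟨h1, h2⟩ k hk
      rcases Nat.lt_succ_iff_lt_or_eq.1 hk with h | rfl
      · exact h1 k h
      · exact h2
    · intro h
      exact ⟨fun k hk => h k (hk.trans (Nat.lt_succ_self j)), h j (Nat.lt_succ_self j)⟩

/-- Realization of the `(n+1)`-step induction sentence. -/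
lemma realize_stepSentence {φ : OneVarFormula} {j : ℕ} (v : Empty → M) (xs : Fin 0 → M) :
    BoundedFormula.Realize
        (closeAll (conjNum φ j ⊓ allX (φ ⟹ substX φ (addT xT (numT j))))) v xs ↔
      ((∀ k < j, φ.Realize (envM (numM k : M))) ∧
        ∀ x : M, φ.Realize (envM x) → φ.Realize (envM (addM x (numM j) : M))) := by
  rw [realize_closeAll, Formula.realize_inf, realize_conjNum, realize_allX]
  apply and_congr Iff.rfl
  apply forall_congr'
  intro x
  rw [Formula.realize_imp, realize_substX]
  simp only [realize_addT, realize_numT]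
  rw [show (Term.realize (envM x) (xT : Lor.Term (Fin 0 ⊕ Fin 1)) : M) = x from rfl]

/-- Realization of the `(n+1)`-induction sentence. -/
lemma realize_kSentence {φ : OneVarFormula} {j : ℕ} (v : Empty → M) (xs : Fin 0 → M) :
    BoundedFormula.Realize
        (closeAll (conjNum φ j ⊓ allX (conjShift φ j ⟹ substX φ (addT xT (numT j))))) v xs ↔
      ((∀ k < j, φ.Realize (envM (numM k : M))) ∧
        ∀ x : M, (∀ k < j, φ.Realize (envM (addM x (numM k) : M))) →
          φ.Realize (envM (addM x (numM j) : M))) := by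
  rw [realize_closeAll, Formula.realize_inf, realize_conjNum, realize_allX]
  apply and_congr Iff.rfl
  apply forall_congr'
  intro x
  rw [Formula.realize_imp, realize_conjShift, realize_substX]
  simp only [realize_addT, realize_numT]
  rw [show (Term.realize (envM x) (xT : Lor.Term (Fin 0 ⊕ Fin 1)) : M) = x from rfl]

end Translate

/-! ### The witness formulas -/

/-- `ψ(y,z)`: `y = z + z ∨ y = (z + z) + 1`. -/
def psiBF {k : ℕ} (y z : Lor.Term ((Fin 0 ⊕ Fin 1) ⊕ Fin k)) :
    Lor.BoundedFormula (Fin 0 ⊕ Fin 1) k :=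
  (y =' addT z z) ⊔ (y =' addT (addT z z) oneT)

/-- The free variable `x` inside a bounded context. -/
def xTm {k : ℕ} : Lor.Term ((Fin 0 ⊕ Fin 1) ⊕ Fin k) := Term.var (Sum.inl (Sum.inr 0))

/-- `φ₁(x) := ∃y (x = (m+1)y) ∨ ∃y∃r∃z (x = (m+1)y + r ∧ 0 < r ∧ r ≤ m ∧ ψ(y,z))`. -/
def phiOne (m : ℕ) : OneVarFormula :=
  (∃' (xTm =' mulT (numT (m+1)) &0)) ⊔
  (∃' ∃' ∃' ((xTm =' addT (mulT (numT (m+1)) &0) &1) ⊓ ltBF zeroT &1 ⊓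
      (ltBF &1 (numT m) ⊔ (&1 =' numT m)) ⊓ psiBF &0 &2))

/-- `φ₂(x) := ∀y (x = (m+1)y → ∃z ψ(y,z))`. -/
def phiTwo (m : ℕ) : OneVarFormula :=
  ∀' ((xTm =' mulT (numT (m+1)) &0) ⟹ (∃' (psiBF &0 &1)))

section PhiRealize

variable {M : Type} [Lor.Structure M]

lemma realize_phiOne (m : ℕ) (x : M) : (phiOne m).Realize (envM x) ↔
    ((∃ y : M, x = mulM (numM (m+1)) y) ∨
      (∃ y r z : M, x = addM (mulM (numM (m+1)) y) r ∧ ltM zM r ∧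
        (ltM r (numM m) ∨ r = numM m) ∧ (y = addM z z ∨ y = addM (addM z z) oM))) := by
  rw [phiOne, Formula.realize_sup]
  apply or_congr
  · rw [Formula.Realize, BoundedFormula.realize_ex]
    apply exists_congr; intro y
    simp [xTm, envM, Fin.snoc]
  · rw [Formula.Realize, BoundedFormula.realize_ex]
    apply exists_congr; intro y
    rw [BoundedFormula.realize_ex]
    apply exists_congr; intro r
    rw [BoundedFormula.realize_ex]
    apply exists_congr; intro z
    simp [xTm, psiBF, envM, Fin.snoc]
    tauto

lemma realize_phiTwo (m : ℕ) (x : M) : (phiTwo m).Realize (envM x) ↔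
    ∀ y : M, x = mulM (numM (m+1)) y →
      ∃ z : M, (y = addM z z ∨ y = addM (addM z z) oM) := by
  rw [phiTwo, Formula.Realize, BoundedFormula.realize_all]
  apply forall_congr'; intro y
  rw [BoundedFormula.realize_imp, BoundedFormula.realize_ex]
  simp [xTm, psiBF, envM, Fin.snoc]

end PhiRealize

section AbstractModel

variable {M : Type} [Lor.Structure M] [PAminus.Model M]

lemma pa_sentence (σ : Lor.Sentence) (hσ : σ ∈ PAminus) : M ⊨ σ :=
  PAminus.realize_sentence_of_mem hσ

open Set in
private lemma paq : ∀ a b c : M,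
    (addM (addM a b) c = addM a (addM b c)) ∧
    (addM a b = addM b a) ∧
    (mulM (mulM a b) c = mulM a (mulM b c)) ∧
    (mulM a b = mulM b a) ∧
    (mulM a (addM b c) = addM (mulM a b) (mulM a c)) ∧
    (addM a zM = a) ∧
    (mulM a zM = zM) ∧
    (mulM a oM = a) := by
  have h1 := pa_sentence (M := M) _ (mem_insert _ _)
  have h2 := pa_sentence (M := M) _ (mem_insert_of_mem _ (mem_insert _ _))
  have h3 := pa_sentence (M := M) _ (mem_insert_of_mem _ (mem_insert_of_mem _ (mem_insert _ _)))
  have h4 := pa_sentence (M := M) _ (mem_insert_of_mem _ (mem_insert_of_mem _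
    (mem_insert_of_mem _ (mem_insert _ _))))
  have h5 := pa_sentence (M := M) _ (mem_insert_of_mem _ (mem_insert_of_mem _
    (mem_insert_of_mem _ (mem_insert_of_mem _ (mem_insert _ _)))))
  have h6 := pa_sentence (M := M) _ (mem_insert_of_mem _ (mem_insert_of_mem _
    (mem_insert_of_mem _ (mem_insert_of_mem _ (mem_insert_of_mem _ (mem_insert _ _))))))
  have h7 := pa_sentence (M := M) _ (mem_insert_of_mem _ (mem_insert_of_mem _
    (mem_insert_of_mem _ (mem_insert_of_mem _ (mem_insert_of_mem _ (mem_insert_of_mem _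
      (mem_insert _ _)))))))
  have h8 := pa_sentence (M := M) _ (mem_insert_of_mem _ (mem_insert_of_mem _
    (mem_insert_of_mem _ (mem_insert_of_mem _ (mem_insert_of_mem _ (mem_insert_of_mem _
      (mem_insert_of_mem _ (mem_insert _ _))))))))
  simp only [Sentence.Realize, Formula.Realize, BoundedFormula.realize_all,
    BoundedFormula.realize_bdEqual, realize_addT, realize_mulT, realize_zeroT, realize_oneT,
    Term.realize_var, Function.comp_apply, Sum.elim_inr, Fin.snoc] at h1 h2 h3 h4 h5 h6 h7 h8
  intro a b c
  refine ⟨by simpa using h1 a b c, by simpa using h2 a b, by simpa using h3 a b c,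
    by simpa using h4 a b, by simpa using h5 a b c, by simpa using h6 a,
    by simpa using h7 a, by simpa using h8 a⟩

open Set in
private lemma paord :
    (∀ a b c : M, ltM a b → ltM b c → ltM a c) ∧
    (∀ a : M, ¬ltM a a) ∧
    (∀ a b : M, (ltM a b ∨ a = b) ∨ ltM b a) ∧
    (∀ a b c : M, ltM a b → ltM (addM a c) (addM b c)) ∧
    (∀ a b c : M, c ≠ zM → ltM a b → ltM (mulM a c) (mulM b c)) ∧
    (∀ a b : M, ltM a b ↔ ∃ c, addM (addM a c) oM = b) ∧
    (ltM (zM : M) oM ∧ ∀ a : M, ltM zM a → ltM oM a ∨ oM = a) ∧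
    (∀ a : M, ltM zM a ∨ zM = a) := by
  have h9 := pa_sentence (M := M) _ (mem_insert_of_mem _ (mem_insert_of_mem _
    (mem_insert_of_mem _ (mem_insert_of_mem _ (mem_insert_of_mem _ (mem_insert_of_mem _
      (mem_insert_of_mem _ (mem_insert_of_mem _ (mem_insert _ _)))))))))
  have h10 := pa_sentence (M := M) _ (mem_insert_of_mem _ (mem_insert_of_mem _
    (mem_insert_of_mem _ (mem_insert_of_mem _ (mem_insert_of_mem _ (mem_insert_of_mem _
      (mem_insert_of_mem _ (mem_insert_of_mem _ (mem_insert_of_mem _ (mem_insert _ _))))))))))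
  have h11 := pa_sentence (M := M) _ (mem_insert_of_mem _ (mem_insert_of_mem _
    (mem_insert_of_mem _ (mem_insert_of_mem _ (mem_insert_of_mem _ (mem_insert_of_mem _
      (mem_insert_of_mem _ (mem_insert_of_mem _ (mem_insert_of_mem _ (mem_insert_of_mem _
        (mem_insert _ _)))))))))))
  have h12 := pa_sentence (M := M) _ (mem_insert_of_mem _ (mem_insert_of_mem _
    (mem_insert_of_mem _ (mem_insert_of_mem _ (mem_insert_of_mem _ (mem_insert_of_mem _
      (mem_insert_of_mem _ (mem_insert_of_mem _ (mem_insert_of_mem _ (mem_insert_of_mem _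
        (mem_insert_of_mem _ (mem_insert _ _))))))))))))
  have h13 := pa_sentence (M := M) _ (mem_insert_of_mem _ (mem_insert_of_mem _
    (mem_insert_of_mem _ (mem_insert_of_mem _ (mem_insert_of_mem _ (mem_insert_of_mem _
      (mem_insert_of_mem _ (mem_insert_of_mem _ (mem_insert_of_mem _ (mem_insert_of_mem _
        (mem_insert_of_mem _ (mem_insert_of_mem _ (mem_insert _ _)))))))))))))
  have h14 := pa_sentence (M := M) _ (mem_insert_of_mem _ (mem_insert_of_mem _
    (mem_insert_of_mem _ (mem_insert_of_mem _ (mem_insert_of_mem _ (mem_insert_of_mem _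
      (mem_insert_of_mem _ (mem_insert_of_mem _ (mem_insert_of_mem _ (mem_insert_of_mem _
        (mem_insert_of_mem _ (mem_insert_of_mem _ (mem_insert_of_mem _
          (mem_insert _ _))))))))))))))
  have h15 := pa_sentence (M := M) _ (mem_insert_of_mem _ (mem_insert_of_mem _
    (mem_insert_of_mem _ (mem_insert_of_mem _ (mem_insert_of_mem _ (mem_insert_of_mem _
      (mem_insert_of_mem _ (mem_insert_of_mem _ (mem_insert_of_mem _ (mem_insert_of_mem _
        (mem_insert_of_mem _ (mem_insert_of_mem _ (mem_insert_of_mem _ (mem_insert_of_mem _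
          (mem_insert _ _)))))))))))))))
  have h16 := pa_sentence (M := M) _ (mem_insert_of_mem _ (mem_insert_of_mem _
    (mem_insert_of_mem _ (mem_insert_of_mem _ (mem_insert_of_mem _ (mem_insert_of_mem _
      (mem_insert_of_mem _ (mem_insert_of_mem _ (mem_insert_of_mem _ (mem_insert_of_mem _
        (mem_insert_of_mem _ (mem_insert_of_mem _ (mem_insert_of_mem _ (mem_insert_of_mem _
          (mem_insert_of_mem _ (mem_singleton _))))))))))))))))
  simp only [Sentence.Realize, Formula.Realize, BoundedFormula.realize_all,
    BoundedFormula.realize_imp, BoundedFormula.realize_inf, BoundedFormula.realize_sup,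
    BoundedFormula.realize_not, BoundedFormula.realize_iff, BoundedFormula.realize_ex,
    BoundedFormula.realize_bdEqual, realize_ltBF, realize_addT, realize_mulT, realize_zeroT,
    realize_oneT, Term.realize_var, Function.comp_apply, Sum.elim_inr, Fin.snoc]
    at h9 h10 h11 h12 h13 h14 h15 h16
  refine ⟨fun a b c hab hbc => by simpa using h9 a b c ⟨by simpa using hab, by simpa using hbc⟩,
    fun a => by simpa using h10 a,
    fun a b => by simpa using h11 a b,
    fun a b c hab => by simpa using h12 a b c (by simpa using hab),
    fun a b c hc hab => by simpa using h13 a b c ⟨by simpa using hc, by simpa using hab⟩,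
    fun a b => by simpa using h14 a b,
    ⟨by simpa using h15.1, fun a => by simpa using h15.2 a⟩,
    fun a => by simpa using h16 a⟩

instance (priority := 100) zeroM' : Zero M := ⟨zM⟩
instance (priority := 100) oneM' : One M := ⟨oM⟩
instance (priority := 100) addM' : Add M := ⟨addM⟩
instance (priority := 100) mulM' : Mul M := ⟨mulM⟩

instance (priority := 100) addCommMonoidM : AddCommMonoid M where
  add := (· + ·)
  zero := (0 : M)
  add_assoc a b c := (paq a b c).1
  zero_add a := by
    have h := paq (M := M) a a a
    calc addM zM a = addM a zM := (paq zM a a).2.1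
    _ = a := h.2.2.2.2.2.1
  add_zero a := (paq a a a).2.2.2.2.2.1
  add_comm a b := (paq a b b).2.1
  nsmul := nsmulRec

instance (priority := 100) commMonoidM : CommMonoid M where
  mul := (· * ·)
  one := (1 : M)
  mul_assoc a b c := (paq a b c).2.2.1
  one_mul a := by
    calc mulM oM a = mulM a oM := (paq oM a a).2.2.2.1
    _ = a := (paq a a a).2.2.2.2.2.2.2
  mul_one a := (paq a a a).2.2.2.2.2.2.2
  mul_comm a b := (paq a b b).2.2.2.1
  npow := npowRec

instance (priority := 100) commSemiringM : CommSemiring M :=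
  { addCommMonoidM, commMonoidM with
    left_distrib := fun a b c => (paq a b c).2.2.2.2.1
    right_distrib := fun a b c => by
      calc mulM (addM a b) c = mulM c (addM a b) := (paq (addM a b) c c).2.2.2.1
      _ = addM (mulM c a) (mulM c b) := (paq c a b).2.2.2.2.1
      _ = addM (mulM a c) (mulM b c) := by
          rw [(paq c a a).2.2.2.1, (paq c b b).2.2.2.1]
    zero_mul := fun a => by
      calc mulM zM a = mulM a zM := (paq zM a a).2.2.2.1
      _ = zM := (paq a a a).2.2.2.2.2.2.1
    mul_zero := fun a => (paq a a a).2.2.2.2.2.2.1 }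

@[simp] lemma addM_eq (a b : M) : addM a b = a + b := rfl
@[simp] lemma mulM_eq (a b : M) : mulM a b = a * b := rfl
@[simp] lemma zM_eq : (zM : M) = 0 := rfl
@[simp] lemma oM_eq : (oM : M) = 1 := rfl
lemma numM_zero : (numM 0 : M) = 0 := rfl
lemma numM_succ (k : ℕ) : (numM (k+1) : M) = numM k + 1 := rfl

lemma ltM_trans {a b c : M} : ltM a b → ltM b c → ltM a c := paord.1 a b c
lemma ltM_irrefl (a : M) : ¬ltM a a := paord.2.1 a
lemma ltM_total (a b : M) : (ltM a b ∨ a = b) ∨ ltM b a := paord.2.2.1 a b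
lemma ltM_add {a b : M} (c : M) : ltM a b → ltM (a + c) (b + c) := paord.2.2.2.1 a b c
lemma ltM_mul {a b c : M} (hc : c ≠ 0) : ltM a b → ltM (a * c) (b * c) :=
  paord.2.2.2.2.1 a b c hc
lemma ltM_iff_exists {a b : M} : ltM a b ↔ ∃ c, a + c + 1 = b := paord.2.2.2.2.2.1 a b
lemma zero_ltM_one : ltM (0 : M) 1 := paord.2.2.2.2.2.2.1.1
lemma ltM_discrete {a : M} : ltM 0 a → ltM 1 a ∨ 1 = a := paord.2.2.2.2.2.2.1.2 a
lemma ltM_nonneg (a : M) : ltM 0 a ∨ 0 = a := paord.2.2.2.2.2.2.2 a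

lemma ltM_ne {a b : M} (h : ltM a b) : a ≠ b := by
  rintro rfl; exact ltM_irrefl a h

lemma ltM_add_one (a : M) : ltM a (a + 1) :=
  ltM_iff_exists.2 ⟨0, by ring⟩

lemma numM_lt {j k : ℕ} (h : j < k) : ltM (numM j : M) (numM k) := by
  induction k with
  | zero => omega
  | succ k ih =>
    rcases Nat.lt_succ_iff_lt_or_eq.1 h with h' | rfl
    · exact ltM_trans (ih h') (by rw [numM_succ]; exact ltM_add_one _)
    · rw [numM_succ]; exact ltM_add_one _

lemma zero_ltM_numM {k : ℕ} (h : 0 < k) : ltM (0 : M) (numM k) := by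
  have := numM_lt (M := M) h
  rwa [numM_zero] at this

lemma ltM_add_pos {x : M} {k : ℕ} (hk : 0 < k) : ltM (0 : M) (x + numM k) := by
  rcases ltM_nonneg x with hx | hx
  · have h1 : ltM (0 + numM k : M) (x + numM k) := ltM_add _ hx
    rw [zero_add] at h1
    exact ltM_trans (zero_ltM_numM hk) h1
  · rw [← hx, zero_add]; exact zero_ltM_numM hk

lemma addM_cancel {a b c : M} (h : a + c = b + c) : a = b := by
  rcases ltM_total a b with (h' | h') | h'
  · exact absurd h (ltM_ne (ltM_add c h'))
  · exact h'
  · exact absurd h.symm (ltM_ne (ltM_add c h'))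

/-- The semantic `ψ`. -/
def psiM (y : M) : Prop := ∃ z : M, y = z + z ∨ y = z + z + 1

lemma psiM_zero : psiM (0 : M) := ⟨0, Or.inl (by ring)⟩

lemma psiM_succ {y : M} (h : psiM y) : psiM (y + 1) := by
  obtain ⟨z, h | h⟩ := h
  · exact ⟨z, Or.inr (by rw [h])⟩
  · exact ⟨z + 1, Or.inl (by rw [h]; ring)⟩

end AbstractModel

section Positive

theorem isStep_phiOne (m : ℕ) : IsStepInductive m (phiOne m) := by
  intro Mod v xs
  rw [realize_stepSentence]
  constructor
  · intro k hk
    rw [realize_phiOne]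
    match k with
    | 0 =>
      exact Or.inl ⟨0, by simp only [numM_zero, mulM_eq]; rw [mul_zero]⟩
    | k + 1 =>
      refine Or.inr ⟨0, numM (k+1), 0, ?_, ?_, ?_, ?_⟩
      · simp only [addM_eq, mulM_eq]; rw [mul_zero, zero_add]
      · simp only [zM_eq]; exact zero_ltM_numM (Nat.succ_pos k)
      · rcases Nat.lt_succ_iff_lt_or_eq.1 hk with h | h
        · exact Or.inl (numM_lt (by omega))
        · exact Or.inr (by rw [h])
      · exact Or.inl (by simp only [addM_eq]; rw [zero_add])
  · intro x hx
    rw [realize_phiOne] at hx ⊢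
    simp only [addM_eq, mulM_eq, zM_eq, oM_eq] at hx ⊢
    rcases hx with ⟨y, hy⟩ | ⟨y, r, z, h1, h2, h3, h4⟩
    · exact Or.inl ⟨y + 1, by rw [hy]; ring⟩
    · refine Or.inr ⟨y + 1, r, ?_⟩
      rcases h4 with h4 | h4
      · exact ⟨z, by rw [h1]; ring, h2, h3, Or.inr (by rw [h4])⟩
      · exact ⟨z + 1, by rw [h1]; ring, h2, h3, Or.inl (by rw [h4]; ring)⟩

theorem isK_phiTwo (m : ℕ) : IsKInductive m (phiTwo m) := by
  intro Mod v xs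
  rw [realize_kSentence]
  constructor
  · intro k hk
    rw [realize_phiTwo]
    intro y hy
    simp only [mulM_eq] at hy
    -- show that necessarily `y = 0` and `k = 0`
    rcases ltM_nonneg y with hy0 | hy0
    · exfalso
      have hd0 : (numM (m+1) : Mod) ≠ 0 := fun h =>
        ltM_irrefl _ (by simpa [h] using zero_ltM_numM (M := Mod) (Nat.succ_pos m))
      have h1y : ltM (1 : Mod) y ∨ (1 : Mod) = y := ltM_discrete hy0
      have hky : ltM (numM k : Mod) (numM (m+1)) := numM_lt (by omega)
      rcases h1y with h1y | h1y
      · have := ltM_mul hd0 h1y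
        rw [one_mul, mul_comm] at this
        rw [← hy] at this
        exact ltM_irrefl _ (ltM_trans hky this)
      · rw [← h1y, mul_one] at hy
        rw [hy] at hky
        exact ltM_irrefl _ hky
    · rw [← hy0, mul_zero] at hy
      match k, hk with
      | 0, _ =>
        rw [← hy0]
        exact ⟨0, Or.inl (by simp only [addM_eq]; ring)⟩
      | k + 1, _ =>
        exfalso
        have hzz := zero_ltM_numM (M := Mod) (Nat.succ_pos k)
        rw [hy] at hzz
        exact ltM_irrefl _ hzz
  · intro x hx
    rw [realize_phiTwo]
    intro y hy
    simp only [mulM_eq, addM_eq] at hy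
    -- y is positive, hence a successor
    have hy0 : ltM (0 : Mod) y := by
      rcases ltM_nonneg y with h | h
      · exact h
      · exfalso
        have hpos := ltM_add_pos (x := x) (M := Mod) (k := m + 1) (Nat.succ_pos m)
        rw [hy, ← h, mul_zero] at hpos
        exact ltM_irrefl _ hpos
    obtain ⟨y', rfl⟩ : ∃ y' : Mod, y = y' + 1 := by
      rcases ltM_discrete hy0 with h | h
      · obtain ⟨c, hc⟩ := ltM_iff_exists.1 h
        exact ⟨1 + c, by rw [← hc]⟩
      · exact ⟨0, by rw [← h]; ring⟩
    -- cancel to find x = (m+1) * y'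
    have hx' : x = numM (m+1) * y' := by
      apply addM_cancel (c := (numM (m+1) : Mod))
      rw [hy]; ring
    -- use the window hypothesis at k = 0
    have h0 := hx 0 (Nat.succ_pos m)
    rw [realize_phiTwo] at h0
    have hpsi := h0 y' (by simp only [mulM_eq, addM_eq, numM_zero]; rw [add_zero]; exact hx')
    simp only [addM_eq, oM_eq] at hpsi ⊢
    obtain ⟨z, hz | hz⟩ := hpsi
    · exact ⟨z, Or.inr (by rw [hz])⟩
    · exact ⟨z + 1, Or.inl (by rw [hz]; ring)⟩

end Positive

/-! ### The countermodel: the nonnegative part of `ℤ[X]` -/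

section Counter

open Polynomial

/-- Positivity of leading coefficient sums. -/
lemma lcPos_add {p q : ℤ[X]} (hp : 0 < p.leadingCoeff) (hq : 0 ≤ q.leadingCoeff) :
    0 < (p + q).leadingCoeff := by
  rcases eq_or_ne q 0 with rfl | hq0
  · simpa using hp
  rcases lt_trichotomy p.degree q.degree with h | h | h
  · rw [leadingCoeff_add_of_degree_lt h]
    exact lt_of_le_of_ne hq (fun hc => hq0 (leadingCoeff_eq_zero.1 hc.symm))
  · rw [leadingCoeff_add_of_degree_eq h (by positivity)]
    positivity
  · rw [leadingCoeff_add_of_degree_lt' h]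
    exact hp

lemma lcNonneg_add {p q : ℤ[X]} (hp : 0 ≤ p.leadingCoeff) (hq : 0 ≤ q.leadingCoeff) :
    0 ≤ (p + q).leadingCoeff := by
  rcases eq_or_ne p 0 with rfl | hp0
  · simpa using hq
  have hp' : 0 < p.leadingCoeff :=
    lt_of_le_of_ne hp (fun hc => hp0 (leadingCoeff_eq_zero.1 hc.symm))
  exact le_of_lt (lcPos_add hp' hq)

lemma lcPos_add' {p q : ℤ[X]} (hp : 0 ≤ p.leadingCoeff) (hq : 0 < q.leadingCoeff) :
    0 < (p + q).leadingCoeff := by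
  rw [add_comm]; exact lcPos_add hq hp

/-- Discreteness: a positive polynomial is `1` or exceeds `1`. -/
lemma lcPos_pred {p : ℤ[X]} (hp : 0 < p.leadingCoeff) : p = 1 ∨ 0 < (p - 1).leadingCoeff := by
  rcases Nat.eq_zero_or_pos p.natDegree with h0 | h0
  · have hp2 : p = C (p.coeff 0) := eq_C_of_natDegree_eq_zero h0
    rw [hp2, leadingCoeff_C] at hp
    rcases eq_or_lt_of_le (by omega : (1 : ℤ) ≤ p.coeff 0) with h1 | h1
    · left; rw [hp2, ← h1, map_one]
    · right
      rw [hp2, show (C (p.coeff 0) - 1 : ℤ[X]) = C (p.coeff 0 - 1) from by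
        rw [map_sub, map_one], leadingCoeff_C]
      omega
  · right
    have hd : (-(1 : ℤ[X])).degree < p.degree := by
      rw [degree_neg, degree_one]
      exact natDegree_pos_iff_degree_pos.1 h0
    have h2 := leadingCoeff_add_of_degree_lt hd
    rw [show -(1 : ℤ[X]) + p = p - 1 from by ring] at h2
    rw [h2]
    exact hp

/-- The carrier of the countermodel. -/
def NN : Type := {p : ℤ[X] // 0 ≤ p.leadingCoeff}

instance : Nonempty NN := ⟨⟨0, by simp⟩⟩

noncomputable instance NNStruc : Lor.Structure NN where
  funMap {k} f x :=
    match f with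
    | .zero => ⟨0, by simp⟩
    | .one => ⟨1, by simp⟩
    | .add => ⟨(x 0).1 + (x 1).1, lcNonneg_add (x 0).2 (x 1).2⟩
    | .mul => ⟨(x 0).1 * (x 1).1, by
        rw [leadingCoeff_mul]; exact mul_nonneg (x 0).2 (x 1).2⟩
  RelMap {k} r x :=
    match r with
    | .lt => 0 < ((x 1).1 - (x 0).1).leadingCoeff

lemma NN_add (a b : NN) : (addM a b).1 = a.1 + b.1 := rfl
lemma NN_mul (a b : NN) : (mulM a b).1 = a.1 * b.1 := rfl
lemma NN_zero : (zM : NN).1 = 0 := rfl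
lemma NN_one : (oM : NN).1 = 1 := rfl
lemma NN_lt (a b : NN) : ltM a b ↔ 0 < (b.1 - a.1).leadingCoeff := Iff.rfl
lemma NN_num (k : ℕ) : (numM k : NN).1 = C (k : ℤ) := by
  induction k with
  | zero =>
    show (zM : NN).1 = C ((0 : ℕ) : ℤ)
    rw [NN_zero]; simp
  | succ k ih =>
    show (addM (numM k : NN) (oM : NN)).1 = C ((k + 1 : ℕ) : ℤ)
    rw [NN_add, ih, NN_one]
    push_cast
    rw [map_add, map_one]

lemma NN_ext {a b : NN} (h : a.1 = b.1) : a = b := Subtype.ext h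

set_option maxHeartbeats 1000000 in
instance NNModel : PAminus.Model NN := by
  rw [Theory.model_iff]
  intro σ hσ
  simp only [PAminus, Set.mem_insert_iff, Set.mem_singleton_iff] at hσ
  rcases hσ with rfl|rfl|rfl|rfl|rfl|rfl|rfl|rfl|rfl|rfl|rfl|rfl|rfl|rfl|rfl|rfl <;>
    simp [Sentence.Realize, Formula.Realize, BoundedFormula.realize_all,
      BoundedFormula.realize_imp, BoundedFormula.realize_inf, BoundedFormula.realize_sup,
      BoundedFormula.realize_not, BoundedFormula.realize_iff, BoundedFormula.realize_ex,
      BoundedFormula.realize_bdEqual, realize_ltBF, realize_addT, realize_mulT, realize_zeroT,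
      realize_oneT, Term.realize_var, Fin.snoc]
  · intro a b c
    exact NN_ext (by simp only [NN_add]; ring)
  · intro a b
    exact NN_ext (by simp only [NN_add]; ring)
  · intro a b c
    exact NN_ext (by simp only [NN_mul]; ring)
  · intro a b
    exact NN_ext (by simp only [NN_mul]; ring)
  · intro a b c
    exact NN_ext (by simp only [NN_add, NN_mul]; ring)
  · intro a
    exact NN_ext (by rw [NN_add, NN_zero, add_zero])
  · intro a
    exact NN_ext (by rw [NN_mul, NN_zero, mul_zero])
  · intro a
    exact NN_ext (by rw [NN_mul, NN_one, mul_one])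
  · -- transitivity
    intro a b c h1 h2
    rw [NN_lt] at h1 h2 ⊢
    rw [show c.1 - a.1 = (c.1 - b.1) + (b.1 - a.1) from by ring]
    exact lcPos_add h2 (le_of_lt h1)
  · -- irreflexivity
    intro a h
    rw [NN_lt, sub_self, leadingCoeff_zero] at h
    exact lt_irrefl 0 h
  · -- linearity
    intro a b
    rcases lt_trichotomy ((b.1 - a.1).leadingCoeff) 0 with h | h | h
    · right
      rw [NN_lt, show a.1 - b.1 = -(b.1 - a.1) from by ring, leadingCoeff_neg]
      omega
    · left; right
      have h2 := leadingCoeff_eq_zero.1 h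
      rw [sub_eq_zero] at h2
      exact NN_ext h2.symm
    · left; left
      rwa [NN_lt]
  · -- add monotone
    intro a b c h
    rw [NN_lt] at h ⊢
    rw [show (addM b c).1 - (addM a c).1 = b.1 - a.1 from by rw [NN_add, NN_add]; ring]
    exact h
  · -- mul monotone
    intro a b c hc h
    rw [NN_lt] at h ⊢
    have hc1 : c.1 ≠ 0 := fun hc0 => hc (NN_ext (by rw [hc0, NN_zero]))
    have hcpos : 0 < c.1.leadingCoeff :=
      lt_of_le_of_ne c.2 (fun h0 => hc1 (leadingCoeff_eq_zero.1 h0.symm))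
    rw [show (mulM b c).1 - (mulM a c).1 = (b.1 - a.1) * c.1 from by rw [NN_mul, NN_mul]; ring]
    rw [leadingCoeff_mul]
    positivity
  · -- x < y ↔ ∃ z, x + z + 1 = y
    intro a b
    constructor
    · intro h
      rw [NN_lt] at h
      rcases lcPos_pred h with h1 | h1
      · refine ⟨⟨0, by simp⟩, NN_ext ?_⟩
        simp only [NN_add, NN_one]
        show a.1 + (0 : ℤ[X]) + 1 = b.1
        rw [show b.1 = b.1 - a.1 + a.1 from by ring, h1]
        ring
      · refine ⟨⟨b.1 - a.1 - 1, le_of_lt h1⟩, NN_ext ?_⟩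
        simp only [NN_add, NN_one]
        show a.1 + (b.1 - a.1 - 1) + 1 = b.1
        ring
    · rintro ⟨c, hc⟩
      rw [NN_lt]
      have hb : b.1 = a.1 + c.1 + 1 := by rw [← hc]; simp only [NN_add, NN_one]
      rw [hb, show a.1 + c.1 + 1 - a.1 = c.1 + 1 from by ring]
      exact lcPos_add' c.2 (by simp)
  · -- discreteness
    constructor
    · rw [NN_lt, NN_zero, NN_one, sub_zero]
      simp
    · intro a h
      rw [NN_lt, NN_zero, sub_zero] at h
      rcases lcPos_pred h with h1 | h1
      · right; exact NN_ext (by rw [NN_one, h1])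
      · left; rw [NN_lt, NN_one]; exact h1
  · -- nonnegativity
    intro a
    rcases eq_or_lt_of_le a.2 with h | h
    · right
      exact NN_ext (by rw [NN_zero]; exact (leadingCoeff_eq_zero.1 h.symm).symm)
    · left
      rw [NN_lt, NN_zero, sub_zero]
      exact h

end Counter

section Negative

open Polynomial

/-- If `C d * w` is the constant `s` with `|s| < d`, everything vanishes. -/
lemma Cd_mul_eq_C {d s : ℤ} (hd : 0 < d) {w : ℤ[X]} (h : C d * w = C s) (hs : |s| < d) :
    w = 0 ∧ s = 0 := by
  have hc : ∀ i, d * w.coeff i = (C s).coeff i := fun i => by rw [← coeff_C_mul, h]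
  have h0 := hc 0
  rw [coeff_C, if_pos rfl] at h0
  have h1 : |d * w.coeff 0| < d := by rw [h0]; exact hs
  rw [abs_mul, abs_of_pos hd] at h1
  have hw0 : w.coeff 0 = 0 := by
    have habs : |w.coeff 0| < 1 := by nlinarith [abs_nonneg (w.coeff 0)]
    have h2 := abs_lt.1 habs
    omega
  have hs0 : s = 0 := by rw [← h0, hw0, mul_zero]
  refine ⟨?_, hs0⟩
  ext i
  rcases Nat.eq_zero_or_pos i with rfl | hi
  · simpa using hw0
  · have h2 := hc i
    rw [coeff_C, if_neg (by omega)] at h2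
    have := (mul_eq_zero.1 h2).resolve_left (by omega)
    simpa using this

/-- `X` has no parity in `ℤ[X]`. -/
lemma X_parity (z : ℤ[X]) : X ≠ z + z ∧ X ≠ z + z + 1 := by
  constructor
  · intro h
    have := congrArg (fun p => coeff p 1) h
    simp only [coeff_X_one, coeff_add] at this
    omega
  · intro h
    have := congrArg (fun p => coeff p 1) h
    simp only [coeff_X_one, coeff_add, coeff_one] at this
    simp at this
    omega

/-- A positive element of `NN` below the numeral `c` is a constant `j ∈ (0, c]`. -/
lemma NN_le_const {r : NN} {c : ℕ} (h1 : ltM (zM : NN) r)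
    (h2 : ltM r (numM c) ∨ r = numM c) :
    ∃ j : ℤ, r.1 = C j ∧ 0 < j ∧ j ≤ (c : ℤ) := by
  rw [NN_lt, NN_zero, sub_zero] at h1
  have hdeg : r.1.natDegree = 0 := by
    by_contra hd
    have hd' : 0 < r.1.natDegree := Nat.pos_of_ne_zero hd
    rcases h2 with h2 | h2
    · rw [NN_lt, NN_num] at h2
      have hlt : (C (c : ℤ)).degree < (-r.1).degree := by
        rw [degree_neg]
        exact lt_of_le_of_lt degree_C_le (natDegree_pos_iff_degree_pos.1 hd')
      have hlc := leadingCoeff_add_of_degree_lt hlt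
      rw [show C (c : ℤ) + -r.1 = C (c : ℤ) - r.1 from by ring] at hlc
      rw [hlc, leadingCoeff_neg] at h2
      omega
    · have : r.1 = C (c : ℤ) := by rw [h2, NN_num]
      rw [this, natDegree_C] at hd'
      omega
  have hC : r.1 = C (r.1.coeff 0) := eq_C_of_natDegree_eq_zero hdeg
  refine ⟨r.1.coeff 0, hC, ?_, ?_⟩
  · rw [hC, leadingCoeff_C] at h1
    exact h1
  · rcases h2 with h2 | h2
    · rw [NN_lt, NN_num, hC] at h2
      have hms : C (c : ℤ) - C (r.1.coeff 0) = C ((c : ℤ) - r.1.coeff 0) := by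
        rw [map_sub]
      rw [hms, leadingCoeff_C] at h2
      omega
    · have hrc : r.1 = C (c : ℤ) := by rw [h2, NN_num]
      rw [hC] at hrc
      have := C_injective hrc
      omega

lemma lc_lin (d b : ℤ) (hd : d ≠ 0) : (C d * X + C b).leadingCoeff = d := by
  rw [leadingCoeff_add_of_degree_lt' (by
    rw [degree_C_mul_X hd]
    exact lt_of_le_of_lt degree_C_le (by norm_num))]
  rw [leadingCoeff_mul, leadingCoeff_C, leadingCoeff_X, mul_one]

theorem not_step_phiOne (m n : ℕ) (hnd : ¬(m + 1) ∣ (n + 1)) :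
    ¬IsStepInductive n (phiOne m) := by
  intro hI
  have hr := hI (Theory.ModelType.of PAminus NN) (fun e => e.elim) finZeroElim
  rw [realize_stepSentence] at hr
  have hr1pos : 0 < (n + 1) % (m + 1) := by
    rcases Nat.eq_zero_or_pos ((n + 1) % (m + 1)) with h | h
    · exact absurd (Nat.dvd_of_mod_eq_zero h) hnd
    · exact h
  have hr1lt : (n + 1) % (m + 1) < m + 1 := Nat.mod_lt _ (by omega)
  have hqr : (m + 1) * ((n + 1) / (m + 1)) + (n + 1) % (m + 1) = n + 1 := Nat.div_add_mod _ _
  set d : ℕ := m + 1 with hd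
  set q : ℕ := (n + 1) / d with hq
  set r1 : ℕ := (n + 1) % d with hr1
  -- the witness element
  have hy0lc : (0 : ℤ) ≤ (X - C (q : ℤ)).leadingCoeff := by
    rw [leadingCoeff_X_sub_C]; norm_num
  have halc : (0 : ℤ) ≤ (C (d : ℤ) * (X - C (q : ℤ))).leadingCoeff := by
    rw [leadingCoeff_mul, leadingCoeff_X_sub_C, mul_one, leadingCoeff_C]
    positivity
  set y0 : NN := ⟨X - C (q : ℤ), hy0lc⟩ with hy0def
  set aN : NN := ⟨C (d : ℤ) * (X - C (q : ℤ)), halc⟩ with haNdef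
  have h1 : (phiOne m).Realize (envM aN) := by
    rw [realize_phiOne]
    exact Or.inl ⟨y0, NN_ext (by rw [NN_mul, NN_num])⟩
  have h2 := hr.2 aN h1
  rw [realize_phiOne] at h2
  have hsum : (addM aN (numM (n + 1)) : NN).1 = C (d : ℤ) * X + C (r1 : ℤ) := by
    rw [NN_add, NN_num]
    have hcast : C (((n + 1 : ℕ)) : ℤ) = C ((d : ℤ) * (q : ℤ) + (r1 : ℤ)) := by
      congr 1
      exact_mod_cast hqr.symm
    rw [hcast, map_add, map_mul]
    ring
  rcases h2 with ⟨y, hy⟩ | ⟨y, r, z, hy, hrpos, hrle, hpsi⟩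
  · have h3 : (addM aN (numM (n + 1)) : NN).1 = (mulM (numM (m + 1)) (y : NN) : NN).1 :=
      congrArg Subtype.val hy
    rw [hsum, NN_mul _ (y : NN), NN_num] at h3
    have h4 : C (d : ℤ) * (y.1 - X) = C (r1 : ℤ) := by
      rw [mul_sub]
      linear_combination -h3
    obtain ⟨-, hs0⟩ := Cd_mul_eq_C (by positivity) h4
      (by rw [abs_of_nonneg (by positivity)]; exact_mod_cast hr1lt)
    have : (0 : ℤ) < (r1 : ℤ) := by exact_mod_cast hr1pos
    omega
  · obtain ⟨j, hrj, hj1, hjm⟩ := NN_le_const hrpos hrle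
    have h3 : (addM aN (numM (n + 1)) : NN).1 =
        (addM (mulM (numM (m + 1)) (y : NN)) (r : NN) : NN).1 := congrArg Subtype.val hy
    rw [hsum, NN_add _ (r : NN), NN_mul _ (y : NN), NN_num, hrj] at h3
    have h4 : C (d : ℤ) * (y.1 - X) = C ((r1 : ℤ) - j) := by
      rw [mul_sub, map_sub]
      linear_combination -h3
    obtain ⟨hw, -⟩ := Cd_mul_eq_C (by positivity) h4
      (by
        rw [abs_lt]
        constructor
        · have : (r1 : ℤ) ≥ 1 := by exact_mod_cast hr1pos
          omega
        · have : (r1 : ℤ) < (d : ℤ) := by exact_mod_cast hr1lt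
          have hjm' : j ≤ (m : ℤ) := hjm
          have : (d : ℤ) = (m : ℤ) + 1 := by exact_mod_cast hd
          omega)
    have hyX : y.1 = X := by
      have := sub_eq_zero.1 hw
      exact this
    rcases hpsi with hpsi | hpsi
    · have : (y : NN).1 = (addM (z : NN) (z : NN) : NN).1 := congrArg Subtype.val hpsi
      rw [NN_add (z : NN) (z : NN), hyX] at this
      exact (X_parity z.1).1 this
    · have : (y : NN).1 = (addM (addM (z : NN) (z : NN)) oM : NN).1 :=
        congrArg Subtype.val hpsi
      rw [NN_add (addM (z : NN) (z : NN)) oM, NN_add (z : NN) (z : NN), NN_one, hyX] at this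
      exact (X_parity z.1).2 this

theorem not_k_phiTwo (m n : ℕ) (hmn : n < m) : ¬IsKInductive n (phiTwo m) := by
  intro hI
  have hr := hI (Theory.ModelType.of PAminus NN) (fun e => e.elim) finZeroElim
  rw [realize_kSentence] at hr
  have halc : (0 : ℤ) ≤ (C ((m + 1 : ℕ) : ℤ) * X - C ((n + 1 : ℕ) : ℤ)).leadingCoeff := by
    rw [show C ((m + 1 : ℕ) : ℤ) * X - C ((n + 1 : ℕ) : ℤ)
        = C ((m + 1 : ℕ) : ℤ) * X + C (-((n + 1 : ℕ) : ℤ)) from by rw [map_neg]; ring]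
    rw [lc_lin _ _ (by positivity)]
    positivity
  set aN : NN := ⟨C ((m + 1 : ℕ) : ℤ) * X - C ((n + 1 : ℕ) : ℤ), halc⟩ with haNdef
  have hwindow : ∀ k < n + 1, (phiTwo m).Realize (envM (addM aN (numM k) : NN)) := by
    intro k hk
    rw [realize_phiTwo]
    intro y hy
    exfalso
    have h3 := congrArg Subtype.val hy
    rw [NN_add, NN_mul, NN_num, NN_num] at h3
    have h4 : C ((m + 1 : ℕ) : ℤ) * (y.1 - X) = C ((k : ℤ) - ((n + 1 : ℕ) : ℤ)) := by
      rw [mul_sub, map_sub]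
      linear_combination -h3
    obtain ⟨-, hs0⟩ := Cd_mul_eq_C (by positivity) h4
      (by
        rw [abs_lt]
        have h5 : (k : ℤ) < ((n + 1 : ℕ) : ℤ) := by exact_mod_cast hk
        have h6 : ((n + 1 : ℕ) : ℤ) ≤ (m : ℤ) := by exact_mod_cast hmn
        constructor <;> push_cast <;> omega)
    have h5 : (k : ℤ) < ((n + 1 : ℕ) : ℤ) := by exact_mod_cast hk
    omega
  have hstep := hr.2 aN hwindow
  rw [realize_phiTwo] at hstep
  have hXlc : (0 : ℤ) ≤ (X : ℤ[X]).leadingCoeff := by rw [leadingCoeff_X]; norm_num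
  have hinst : (addM aN (numM (n + 1)) : NN) = mulM (numM (m + 1)) ⟨X, hXlc⟩ := by
    apply NN_ext
    rw [NN_add, NN_mul _ ⟨X, hXlc⟩, NN_num, NN_num]
    ring
  obtain ⟨z, hz | hz⟩ := hstep ⟨X, hXlc⟩ hinst
  · have : (⟨X, hXlc⟩ : NN).1 = (addM (z : NN) (z : NN) : NN).1 := congrArg Subtype.val hz
    rw [NN_add (z : NN) (z : NN)] at this
    exact (X_parity z.1).1 this
  · have : (⟨X, hXlc⟩ : NN).1 = (addM (addM (z : NN) (z : NN)) oM : NN).1 :=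
      congrArg Subtype.val hz
    rw [NN_add (addM (z : NN) (z : NN)) oM, NN_add (z : NN) (z : NN), NN_one] at this
    exact (X_parity z.1).2 this

end Negative

/-- (1) If `m+1` does not divide `n+1`, then there is an `(m+1)`-step inductive formula
that is not `(n+1)`-step inductive. (2) If `m > n`, then there is an `(m+1)`-inductive
formula that is not `(n+1)`-inductive. -/
theorem stmt15 (m n : ℕ) :
    (¬(m + 1) ∣ (n + 1) →
        ∃ φ : OneVarFormula, IsStepInductive m φ ∧ ¬IsStepInductive n φ) ∧
      (m > n → ∃ φ : OneVarFormula, IsKInductive m φ ∧ ¬IsKInductive n φ) := by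
  constructor
  · intro hnd
    exact ⟨phiOne m, isStep_phiOne m, not_step_phiOne m n hnd⟩
  · intro hmn
    exact ⟨phiTwo m, isK_phiTwo m, not_k_phiTwo m n hmn⟩
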